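/- A finite relational structure A has a tree decomposition of width k if and only if it has an extended tree decomposition of width k and arity 1. -/

import Mathlib

/-- A relational signature: a type of relation symbols with arities. -/
structure Signature where
  symbols : Type
  arity : symbols → ℕ

/-- A relational structure over the signature `σ`. -/
structure Struct (σ : Signature) where
  carrier : Type
  rel : ∀ R : σ.symbols, (Fin (σ.arity R) → carrier) → Prop

/-- `f` is a homomorphism from `A` to `B`: it maps related tuples to related tuples. -/
def IsHom {σ : Signature} (A B : Struct σ) (f : A.carrier → B.carrier) : Prop :=
  ∀ R x, A.rel R x → B.rel R (fun i => f (x i))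

/-- A bijection `e` is an isomorphism between `A` and `B` if it preserves and reflects
all relations. -/
def IsIso {σ : Signature} (A B : Struct σ) (e : A.carrier ≃ B.carrier) : Prop :=
  ∀ R x, A.rel R x ↔ B.rel R (fun i => e (x i))

/-- A class of `σ`-structures is closed under isomorphisms. -/
def IsoClosed {σ : Signature} (K : Struct σ → Prop) : Prop :=
  ∀ A B : Struct σ, ∀ e : A.carrier ≃ B.carrier, IsIso A B e → K A → K B

/-- A class of `σ`-structures is closed under bijective homomorphisms. -/
def BijHomClosed {σ : Signature} (K : Struct σ → Prop) : Prop :=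
  ∀ A B : Struct σ, ∀ f : A.carrier → B.carrier,
    Function.Bijective f → IsHom A B f → K A → K B

/-- A class of `σ`-structures is closed under injective homomorphisms. -/
def InjHomClosed {σ : Signature} (K : Struct σ → Prop) : Prop :=
  ∀ A B : Struct σ, ∀ f : A.carrier → B.carrier,
    Function.Injective f → IsHom A B f → K A → K B

/-- A class of `σ`-structures is closed under surjective homomorphisms. -/
def SurjHomClosed {σ : Signature} (K : Struct σ → Prop) : Prop :=
  ∀ A B : Struct σ, ∀ f : A.carrier → B.carrier,
    Function.Surjective f → IsHom A B f → K A → K B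

/-- `le` is a tree order on `T`: a partial order with a root below everything, in which
every down-set is linearly ordered. -/
def IsTree {T : Type} (le : T → T → Prop) : Prop :=
  (∀ t, le t t) ∧
  (∀ s t, le s t → le t s → s = t) ∧
  (∀ s t u, le s t → le t u → le s u) ∧
  (∃ r, ∀ t, le r t) ∧
  (∀ t x y, le x t → le y t → le x y ∨ le y x)

/-- A set of nodes is a (nonempty) connected subtree: it has a minimum element and
contains every node between that minimum and any of its elements. -/
def IsConnSubtree {T : Type} (le : T → T → Prop) (S : Set T) : Prop :=
  ∃ t₀ ∈ S, (∀ t ∈ S, le t₀ t) ∧ ∀ t ∈ S, ∀ x, le t₀ x → le x t → x ∈ S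

/-- `(T, le, B)` is a tree decomposition of `A`: every related tuple is contained in
some bag, and the set of bags containing any element is a nonempty connected subtree. -/
def IsTreeDecomp {σ : Signature} (A : Struct σ) {T : Type} (le : T → T → Prop)
    (B : T → Set A.carrier) : Prop :=
  IsTree le ∧
  (∀ R x, A.rel R x → ∃ t, ∀ i, x i ∈ B t) ∧
  (∀ a : A.carrier, IsConnSubtree le {t | a ∈ B t})

/-- `(T, le, β, γ)` is an extended tree decomposition of `A`: the combined bags
`β ∪ γ` form a tree decomposition, and elements of a floating bag `γ t` occur in no
bag strictly below `t`. -/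
def IsExtTreeDecomp {σ : Signature} (A : Struct σ) {T : Type} (le : T → T → Prop)
    (β γ : T → Set A.carrier) : Prop :=
  IsTreeDecomp A le (fun t => β t ∪ γ t) ∧
  ∀ (a : A.carrier) (t t' : T), a ∈ γ t → a ∈ β t' ∪ γ t' → le t t'

/-- The extended tree decomposition `(T, le, β, γ)` has arity at most `n`:
fixed bags meet the floating bag of any strictly earlier node in at most `n` elements,
and every related tuple lies in some combined bag meeting its floating part in at most
`n` elements of the tuple. -/
def ArityLE {σ : Signature} (A : Struct σ) {T : Type} (le : T → T → Prop)
    (β γ : T → Set A.carrier) (n : ℕ) : Prop :=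
  (∀ t t', le t t' → t ≠ t' → (β t' ∩ γ t).ncard ≤ n) ∧
  (∀ R x, A.rel R x →
    ∃ t, (∀ i, x i ∈ β t ∪ γ t) ∧ (Set.range x ∩ γ t).ncard ≤ n)

/-- a finite relational structure has a tree decomposition of width `k`
(all bags of size at most `k+1`) iff it has an extended tree decomposition of width
`k` (all fixed bags of size at most `k`) and arity `1`. -/

lemma ncard_le_one_of_subset_singleton {α : Type*} {s : Set α} {a : α} (h : s ⊆ {a}) :
    s.ncard ≤ 1 :=
  le_trans (Set.ncard_le_ncard h (Set.finite_singleton a)) (by simp)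

lemma subset_singleton_of_mem_of_ncard_le_one {α : Type*} {s : Set α} (hfin : s.Finite)
    {a : α} (ha : a ∈ s) (h : s.ncard ≤ 1) : s ⊆ {a} := by
  intro b hb
  simp only [Set.mem_singleton_iff]
  by_contra hne
  have hsub : ({a, b} : Set α) ⊆ s := by
    intro x hx; rcases hx with rfl | hx
    · exact ha
    · rw [Set.mem_singleton_iff] at hx; subst hx; exact hb
  have h2 : ({a, b} : Set α).ncard ≤ s.ncard := Set.ncard_le_ncard hsub hfin
  rw [Set.ncard_pair (Ne.symm hne)] at h2
  omega

lemma finset_exists_max {T : Type} (r : T → T → Prop)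
    (htrans : ∀ a b c, r a b → r b c → r a c) (S : Finset T) :
    S.Nonempty → (∀ x ∈ S, ∀ y ∈ S, r x y ∨ r y x) → ∃ m ∈ S, ∀ x ∈ S, r x m := by
  classical
  refine Finset.induction_on S (by intro h; simp at h) ?_
  intro a s ha ih _ hcomp
  rcases s.eq_empty_or_nonempty with rfl | hne
  · refine ⟨a, by simp, ?_⟩
    intro x hx
    have hxa : x = a := by simpa using hx
    rcases hcomp x hx x hx with h | h
    · exact hxa ▸ h
    · exact hxa ▸ h
  · obtain ⟨m, hm, hmax⟩ := ih hne (fun x hx y hy =>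
      hcomp x (Finset.mem_insert_of_mem hx) y (Finset.mem_insert_of_mem hy))
    rcases hcomp a (Finset.mem_insert_self a s) m (Finset.mem_insert_of_mem hm) with h | h
    · refine ⟨m, Finset.mem_insert_of_mem hm, ?_⟩
      intro x hx
      rcases Finset.mem_insert.mp hx with rfl | hx
      · exact h
      · exact hmax x hx
    · refine ⟨a, Finset.mem_insert_self a s, ?_⟩
      intro x hx
      rcases Finset.mem_insert.mp hx with rfl | hx
      · rcases hcomp x (Finset.mem_insert_self x s) x (Finset.mem_insert_self x s) with h' | h' <;> exact h'
      · exact htrans x m a (hmax x hx) h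

lemma set_exists_max {T : Type} (r : T → T → Prop)
    (htrans : ∀ a b c, r a b → r b c → r a c) {S : Set T} (hfin : S.Finite)
    (hne : S.Nonempty) (hcomp : ∀ x ∈ S, ∀ y ∈ S, r x y ∨ r y x) :
    ∃ m ∈ S, ∀ x ∈ S, r x m := by
  obtain ⟨m, hm, hmax⟩ := finset_exists_max r htrans hfin.toFinset
    (by simpa using hne) (by simpa using hcomp)
  exact ⟨m, by simpa using hm, fun x hx => hmax x (hfin.mem_toFinset.mpr hx)⟩

section Defs
variable {T C : Type}

def FNode (B : T → Set C) (m : C → T) : Type :=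
  Option {p : T × C // p.2 ∈ B p.1 ∧ m p.2 = p.1}

def fLe (B : T → Set C) (m : C → T) (le : T → T → Prop) (e : C → ℕ) :
    FNode B m → FNode B m → Prop
  | none, _ => True
  | some _, none => False
  | some p, some q =>
      (le p.1.1 q.1.1 ∧ p.1.1 ≠ q.1.1) ∨ (p.1.1 = q.1.1 ∧ e p.1.2 ≤ e q.1.2)

def fBeta (B : T → Set C) (m : C → T) (e : C → ℕ) : FNode B m → Set C
  | none => ∅
  | some p => {b | b ∈ B p.1.1 ∧ (m b ≠ p.1.1 ∨ e b < e p.1.2)}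

def fGamma (B : T → Set C) (m : C → T) : FNode B m → Set C
  | none => ∅
  | some p => {p.1.2}

end Defs
lemma stmt14_fwd (σ : Signature) (A : Struct σ) (hA : Finite A.carrier) (k : ℕ)
    (h : ∃ (T : Type) (le : T → T → Prop) (B : T → Set A.carrier),
        Finite T ∧ IsTreeDecomp A le B ∧ ∀ t, (B t).ncard ≤ k + 1) :
    ∃ (T : Type) (le : T → T → Prop) (β γ : T → Set A.carrier),
        Finite T ∧ IsExtTreeDecomp A le β γ ∧ (∀ t, (β t).ncard ≤ k) ∧
          ArityLE A le β γ 1 := by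
  classical
  obtain ⟨T, le, B, hT, ⟨⟨hrefl, hanti, htrans, ⟨r, hr⟩, hlin⟩, htup, hconn⟩, hw⟩ := h
  haveI := hA
  haveI := hT
  obtain ⟨n, ⟨eqv⟩⟩ := Finite.exists_equiv_fin A.carrier
  set e : A.carrier → ℕ := fun a => ((eqv a : Fin n) : ℕ) with he
  have einj : Function.Injective e := by
    intro a b hab
    exact eqv.injective (Fin.ext hab)
  have hconn' : ∀ a, ∃ t₀, a ∈ B t₀ ∧ (∀ t, a ∈ B t → le t₀ t) ∧
      (∀ t, a ∈ B t → ∀ x, le t₀ x → le x t → a ∈ B x) := by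
    intro a; obtain ⟨t₀, h1, h2, h3⟩ := hconn a
    exact ⟨t₀, h1, h2, h3⟩
  choose m hmB hmmin hmclos using hconn'
  -- bag membership characterization
  have hbag : ∀ (p : {p : T × A.carrier // p.2 ∈ B p.1 ∧ m p.2 = p.1}) (b : A.carrier),
      b ∈ fBeta B m e (some p) ∪ fGamma B m (some p) ↔
        (b ∈ B p.1.1 ∧ (m b ≠ p.1.1 ∨ e b ≤ e p.1.2)) := by
    rintro ⟨⟨t, a⟩, hta⟩ b
    simp only [fBeta, fGamma, Set.mem_union, Set.mem_setOf_eq, Set.mem_singleton_iff]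
    constructor
    · rintro (⟨hb, hcase | hcase⟩ | rfl)
      · exact ⟨hb, Or.inl hcase⟩
      · exact ⟨hb, Or.inr hcase.le⟩
      · exact ⟨hta.1, Or.inr le_rfl⟩
    · rintro ⟨hb, hcase | hcase⟩
      · exact Or.inl ⟨hb, Or.inl hcase⟩
      · rcases lt_or_eq_of_le hcase with h' | h'
        · exact Or.inl ⟨hb, Or.inr h'⟩
        · exact Or.inr (einj h')
  -- tuple covering
  have hmain : ∀ R x, A.rel R x →
      ∃ u : FNode B m, ∀ i, x i ∈ fBeta B m e u ∪ fGamma B m u := by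
    intro R x hRx
    by_cases hne : Nonempty (Fin (σ.arity R))
    · obtain ⟨t, ht⟩ := htup R x hRx
      obtain ⟨i0⟩ := hne
      have hSne : (m '' B t).Nonempty := ⟨m (x i0), ⟨x i0, ht i0, rfl⟩⟩
      have hcompS : ∀ u ∈ m '' B t, ∀ v ∈ m '' B t, le u v ∨ le v u := by
        rintro u ⟨b, hb, rfl⟩ v ⟨c, hc, rfl⟩
        exact hlin t _ _ (hmmin b t hb) (hmmin c t hc)
      obtain ⟨s, hsS, hsmax⟩ := set_exists_max le htrans (Set.toFinite _) hSne hcompS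
      obtain ⟨b₁, hb₁, rfl⟩ := hsS
      have hst : le (m b₁) t := hmmin b₁ t hb₁
      have hBtsub : ∀ c ∈ B t, c ∈ B (m b₁) := fun c hc =>
        hmclos c t hc (m b₁) (hsmax (m c) ⟨c, hc, rfl⟩) hst
      have hNne : ({c | c ∈ B (m b₁) ∧ m c = m b₁} : Set A.carrier).Nonempty :=
        ⟨b₁, hmB b₁, rfl⟩
      obtain ⟨a, haN, hamax⟩ := set_exists_max (fun a b : A.carrier => e a ≤ e b)
        (fun _ _ _ hab hbc => le_trans hab hbc) (Set.toFinite _) hNne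
        (fun _ _ _ _ => le_total _ _)
      refine ⟨some ⟨(m b₁, a), ⟨haN.1, haN.2⟩⟩, ?_⟩
      intro i
      rw [hbag]
      refine ⟨hBtsub _ (ht i), ?_⟩
      by_cases hmx : m (x i) = m b₁
      · exact Or.inr (hamax (x i) ⟨hBtsub _ (ht i), hmx⟩)
      · exact Or.inl hmx
    · exact ⟨none, fun i => absurd ⟨i⟩ hne⟩
  refine ⟨FNode B m, fLe B m le e, fBeta B m e, fGamma B m, ?_, ⟨⟨⟨?_, ?_, ?_, ?_, ?_⟩, ?_, ?_⟩, ?_⟩, ?_, ?_, ?_⟩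
  -- Finite
  · unfold FNode
    haveI : Finite {p : T × A.carrier // p.2 ∈ B p.1 ∧ m p.2 = p.1} := Subtype.finite
    exact Finite.of_surjective
      (fun o : Unit ⊕ {p : T × A.carrier // p.2 ∈ B p.1 ∧ m p.2 = p.1} =>
        Sum.elim (fun _ => (none : Option _)) some o)
      (fun o => by cases o with
        | none => exact ⟨Sum.inl (), rfl⟩
        | some p => exact ⟨Sum.inr p, rfl⟩)
  -- refl
  · rintro (_ | ⟨⟨t, a⟩, hta⟩)
    · trivial
    · exact Or.inr ⟨rfl, le_rfl⟩
  -- antisymm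
  · rintro (_ | ⟨⟨t, a⟩, hta⟩) (_ | ⟨⟨s, b⟩, hsb⟩) h1 h2
    · rfl
    · exact absurd h2 (by simp [fLe])
    · exact absurd h1 (by simp [fLe])
    · rcases h1 with ⟨hle1, hne1⟩ | ⟨heq1, hle1⟩
      · rcases h2 with ⟨hle2, hne2⟩ | ⟨heq2, hle2⟩
        · exact absurd (hanti t s hle1 hle2) hne1
        · exact absurd heq2.symm hne1
      · rcases h2 with ⟨hle2, hne2⟩ | ⟨heq2, hle2⟩
        · exact absurd heq1.symm hne2
        · have hab : a = b := einj (le_antisymm hle1 hle2)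
          subst heq1; subst hab; rfl
  -- trans
  · rintro (_ | ⟨⟨t, a⟩, hta⟩) (_ | ⟨⟨s, b⟩, hsb⟩) (_ | ⟨⟨u, c⟩, huc⟩) h1 h2
    · exact trivial
    · exact trivial
    · exact trivial
    · exact trivial
    · exact h1.elim
    · exact h1.elim
    · exact h2.elim
    · simp only [fLe] at h1 h2 ⊢
      rcases h1 with ⟨hle1, hne1⟩ | ⟨heq1, hle1⟩
      · rcases h2 with ⟨hle2, hne2⟩ | ⟨heq2, hle2⟩
        · refine Or.inl ⟨htrans _ _ _ hle1 hle2, ?_⟩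
          rintro rfl
          exact hne1 (hanti _ _ hle1 hle2)
        · exact Or.inl ⟨heq2 ▸ hle1, heq2 ▸ hne1⟩
      · rcases h2 with ⟨hle2, hne2⟩ | ⟨heq2, hle2⟩
        · subst heq1
          exact Or.inl ⟨hle2, hne2⟩
        · exact Or.inr ⟨heq1.trans heq2, le_trans hle1 hle2⟩
  -- root
  · exact ⟨none, fun _ => trivial⟩
  -- linearity of down-sets
  · rintro w (_ | ⟨⟨t, a⟩, hta⟩) (_ | ⟨⟨s, b⟩, hsb⟩) h1 h2
    · exact Or.inl trivial
    · exact Or.inl trivial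
    · exact Or.inr trivial
    · rcases w with _ | ⟨⟨u, c⟩, huc⟩
      · exact h1.elim
      · simp only [fLe] at h1 h2 ⊢
        have hta' : le t u := by
          rcases h1 with ⟨h, _⟩ | ⟨h, _⟩
          · exact h
          · rw [h]; exact hrefl u
        have hsb' : le s u := by
          rcases h2 with ⟨h, _⟩ | ⟨h, _⟩
          · exact h
          · rw [h]; exact hrefl u
        rcases eq_or_ne t s with rfl | hts
        · rcases le_total (e a) (e b) with h | h
          · exact Or.inl (Or.inr ⟨rfl, h⟩)
          · exact Or.inr (Or.inr ⟨rfl, h⟩)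
        · rcases hlin u t s hta' hsb' with h | h
          · exact Or.inl (Or.inl ⟨h, hts⟩)
          · exact Or.inr (Or.inl ⟨h, hts.symm⟩)
  -- tuple condition
  · exact hmain
  -- connectivity
  · intro c
    refine ⟨some ⟨(m c, c), ⟨hmB c, rfl⟩⟩, ?_, ?_, ?_⟩
    · exact (hbag _ c).mpr ⟨hmB c, Or.inr le_rfl⟩
    · rintro (_ | ⟨⟨t, b⟩, htb⟩) hu
      · change c ∈ fBeta B m e none ∪ fGamma B m none at hu; simp [fBeta, fGamma] at hu
      · obtain ⟨hc1, hc2⟩ := (hbag _ c).mp hu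
        by_cases hmc : m c = t
        · rcases hc2 with h' | h'
          · exact absurd hmc h'
          · exact Or.inr ⟨hmc, h'⟩
        · exact Or.inl ⟨hmmin c t hc1, hmc⟩
    · rintro (_ | ⟨⟨tu, bu⟩, hu'⟩) hu (_ | ⟨⟨tz, bz⟩, hz⟩) hz1 hz2
      · change c ∈ fBeta B m e none ∪ fGamma B m none at hu; simp [fBeta, fGamma] at hu
      · change c ∈ fBeta B m e none ∪ fGamma B m none at hu; simp [fBeta, fGamma] at hu
      · exact absurd hz1 (by simp [fLe])
      · obtain ⟨hcu, _⟩ := (hbag _ c).mp hu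
        simp only [fLe] at hz1 hz2
        have h1 : le (m c) tz := by
          rcases hz1 with ⟨h, _⟩ | ⟨h, _⟩
          · exact h
          · rw [h]; exact hrefl _
        have h2 : le tz tu := by
          rcases hz2 with ⟨h, _⟩ | ⟨h, _⟩
          · exact h
          · rw [h]; exact hrefl _
        refine (hbag _ c).mpr ⟨hmclos c tu hcu tz h1 h2, ?_⟩
        rcases hz1 with ⟨_, hne⟩ | ⟨_, hle⟩
        · exact Or.inl hne
        · exact Or.inr hle
  -- extended condition
  · rintro c (_ | ⟨⟨t, a⟩, hta⟩) u' hγ hmem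
    · simp [fGamma] at hγ
    · have hca : c = a := by simpa [fGamma] using hγ
      subst hca
      rcases u' with _ | ⟨⟨t', b'⟩, h'⟩
      · simp [fBeta, fGamma] at hmem
      · obtain ⟨hc1, hc2⟩ := (hbag _ c).mp hmem
        have hmc : m c = t := hta.2
        by_cases htt : t = t'
        · subst htt
          rcases hc2 with h' | h'
          · exact absurd hmc h'
          · exact Or.inr ⟨rfl, h'⟩
        · exact Or.inl ⟨hmc ▸ hmmin c t' hc1, htt⟩
  -- width
  · rintro (_ | ⟨⟨t, a⟩, hta⟩)
    · simp [fBeta]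
    · have hsub : fBeta B m e (some ⟨(t, a), hta⟩) ⊆ B t \ {a} := by
        rintro b ⟨hb, hcase⟩
        refine ⟨hb, ?_⟩
        rintro rfl
        rcases hcase with h' | h'
        · exact h' hta.2
        · exact lt_irrefl _ h'
      have hfin : (B t).Finite := Set.toFinite _
      have h1 : (fBeta B m e (some ⟨(t, a), hta⟩)).ncard ≤ (B t \ {a}).ncard :=
        Set.ncard_le_ncard hsub hfin.diff
      have h2 : (B t \ {a}).ncard + 1 = (B t).ncard :=
        Set.ncard_diff_singleton_add_one hta.1 hfin
      have h3 := hw t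
      omega
  -- arity condition 1
  · rintro (_ | ⟨⟨t, a⟩, hta⟩) u' _ _
    · have : fBeta B m e u' ∩ fGamma B m none = ∅ := by
        simp [fGamma]
      rw [this]; simp
    · refine ncard_le_one_of_subset_singleton (a := a) ?_
      intro b hb
      simpa [fGamma] using hb.2
  -- arity condition 2
  · intro R x hRx
    obtain ⟨u, hu⟩ := hmain R x hRx
    refine ⟨u, hu, ?_⟩
    rcases u with _ | ⟨⟨t, a⟩, hta⟩
    · have : Set.range x ∩ fGamma B m none = ∅ := by simp [fGamma]
      rw [this]; simp
    · refine ncard_le_one_of_subset_singleton (a := a) ?_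
      intro b hb
      simpa [fGamma] using hb.2
section RDefs
variable {T C : Type}

def RNode (γ : T → Set C) : Type := T ⊕ {p : T × C // p.2 ∈ γ p.1}

def rnd (γ : T → Set C) : RNode γ → T
  | Sum.inl t => t
  | Sum.inr p => p.1.1

def rLe (γ : T → Set C) (le : T → T → Prop) (β : T → Set C) : RNode γ → RNode γ → Prop
  | Sum.inl s, v => le s (rnd γ v)
  | Sum.inr p, v => Sum.inr p = v ∨ (rnd γ v ≠ p.1.1 ∧ ∃ y, p.1.2 ∈ β y ∧ le y (rnd γ v))

def rB (γ : T → Set C) (β : T → Set C) : RNode γ → Set C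
  | Sum.inl t => β t
  | Sum.inr p => insert p.1.2 (β p.1.1)

end RDefs

lemma stmt14_rev (σ : Signature) (A : Struct σ) (hA : Finite A.carrier) (k : ℕ)
    (h : ∃ (T : Type) (le : T → T → Prop) (β γ : T → Set A.carrier),
        Finite T ∧ IsExtTreeDecomp A le β γ ∧ (∀ t, (β t).ncard ≤ k) ∧
          ArityLE A le β γ 1) :
    ∃ (T : Type) (le : T → T → Prop) (B : T → Set A.carrier),
        Finite T ∧ IsTreeDecomp A le B ∧ ∀ t, (B t).ncard ≤ k + 1 := by
  classical
  obtain ⟨T, le, β, γ, hT, ⟨⟨⟨hrefl, hanti, htrans, ⟨r, hr⟩, hlin⟩, htup, hconn⟩, hext⟩,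
    hw, har1, har2⟩ := h
  haveI := hA
  haveI := hT
  set γ₀ : T → Set A.carrier := fun t => γ t \ β t with hγ₀
  have hextd : ∀ (a : A.carrier) t t', a ∈ γ₀ t → a ∈ β t' ∪ γ t' → le t t' :=
    fun a t t' h1 h2 => hext a t t' h1.1 h2
  have hconn' : ∀ a : A.carrier, ∃ t₀, a ∈ β t₀ ∪ γ t₀ ∧ (∀ t, a ∈ β t ∪ γ t → le t₀ t) ∧
      (∀ t, a ∈ β t ∪ γ t → ∀ x, le t₀ x → le x t → a ∈ β x ∪ γ x) := by
    intro a; obtain ⟨t₀, h1, h2, h3⟩ := hconn a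
    exact ⟨t₀, h1, h2, h3⟩
  choose m hmB hmmin hmclos using hconn'
  have hkey : ∀ (a : A.carrier) t y, a ∈ γ₀ t → a ∈ β y → le t y ∧ t ≠ y := by
    intro a t y h1 h2
    refine ⟨hextd a t y h1 (Or.inl h2), ?_⟩
    rintro rfl
    exact h1.2 h2
  have huniq : ∀ (a : A.carrier) t t', a ∈ γ₀ t → a ∈ γ₀ t' → t = t' := by
    intro a t t' h1 h2
    exact hanti t t' (hextd a t t' h1 (Or.inr h2.1)) (hextd a t' t h2 (Or.inr h1.1))
  have hmγ : ∀ (a : A.carrier) t, a ∈ γ₀ t → m a = t := by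
    intro a t h1
    exact hanti (m a) t (hmmin a t (Or.inr h1.1)) (hextd a t (m a) h1 (hmB a))
  have hbetw : ∀ (a : A.carrier) t y x, a ∈ γ₀ t → a ∈ β y → le t x → le x y → x ≠ t →
      a ∈ β x := by
    intro a t y x h1 h2 hx1 hx2 hxt
    have hmt : m a = t := hmγ a t h1
    have hax : a ∈ β x ∪ γ x := hmclos a y (Or.inl h2) x (by rw [hmt]; exact hx1) hx2
    rcases hax with hbx | hgx
    · exact hbx
    · by_cases hbx : a ∈ β x
      · exact hbx
      · exact absurd (hanti x t (hextd a x t ⟨hgx, hbx⟩ (Or.inr h1.1)) hx1) hxt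
  -- helpers on the new order
  have dest1 : ∀ s (v : RNode γ₀), rLe γ₀ le β (Sum.inl s) v → le s (rnd γ₀ v) :=
    fun _ _ h => h
  have dest2 : ∀ (p : {p : T × A.carrier // p.2 ∈ γ₀ p.1}) (v : RNode γ₀),
      rLe γ₀ le β (Sum.inr p) v →
      Sum.inr p = v ∨ (rnd γ₀ v ≠ p.1.1 ∧ ∃ y, p.1.2 ∈ β y ∧ le y (rnd γ₀ v)) :=
    fun _ _ h => h
  have mk1 : ∀ s (v : RNode γ₀), le s (rnd γ₀ v) → rLe γ₀ le β (Sum.inl s) v :=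
    fun _ _ h => h
  have mk2 : ∀ (p : {p : T × A.carrier // p.2 ∈ γ₀ p.1}) (v : RNode γ₀),
      rnd γ₀ v ≠ p.1.1 → (∃ y, p.1.2 ∈ β y ∧ le y (rnd γ₀ v)) → rLe γ₀ le β (Sum.inr p) v :=
    fun _ _ h1 h2 => Or.inr ⟨h1, h2⟩
  have hlift : ∀ (u v : RNode γ₀), rLe γ₀ le β u v → le (rnd γ₀ u) (rnd γ₀ v) := by
    rintro (s | ⟨⟨s, a⟩, ha⟩) v hcase
    · exact hcase
    · rcases dest2 _ _ hcase with rfl | ⟨hne, y, hy1, hy2⟩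
      · exact hrefl _
      · exact htrans _ _ _ (hkey a s y ha hy1).1 hy2
  have pairlem : ∀ (c d : A.carrier) s y z, c ≠ d → c ∈ γ₀ s → d ∈ γ₀ s → c ∈ β y →
      d ∈ β z → le y z → False := by
    intro c d s y z hcd hc hd hcy hdz hyz
    have hys := hkey c s y hc hcy
    have hdy : d ∈ β y := hbetw d s z y hd hdz hys.1 hyz (Ne.symm hys.2)
    have hsub : ({c, d} : Set A.carrier) ⊆ β y ∩ γ s := by
      intro u hu
      rcases hu with rfl | hu
      · exact ⟨hcy, hc.1⟩
      · rw [Set.mem_singleton_iff] at hu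
        subst hu
        exact ⟨hdy, hd.1⟩
    have h1 := har1 s y hys.1 hys.2
    have h2 : ({c, d} : Set A.carrier).ncard ≤ (β y ∩ γ s).ncard :=
      Set.ncard_le_ncard hsub (Set.toFinite _)
    rw [Set.ncard_pair hcd] at h2
    omega
  refine ⟨RNode γ₀, rLe γ₀ le β, rB γ₀ β, ?_, ⟨⟨?_, ?_, ?_, ?_, ?_⟩, ?_, ?_⟩, ?_⟩
  -- Finite
  · unfold RNode
    haveI : Finite {p : T × A.carrier // p.2 ∈ γ₀ p.1} := Subtype.finite
    infer_instance
  -- refl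
  · rintro (s | ⟨⟨s, a⟩, ha⟩)
    · exact hrefl s
    · exact Or.inl rfl
  -- antisymm
  · rintro (s | ⟨⟨s, a⟩, ha⟩) (t | ⟨⟨t, b⟩, hb⟩) h1 h2
    · exact congrArg Sum.inl (hanti s t h1 h2)
    · rcases dest2 _ _ h2 with heq | ⟨hne, y, hy1, hy2⟩
      · exact heq.symm
      · exfalso
        have h1' : le s t := h1
        have hty := hkey b t y hb hy1
        exact hne (hanti s t h1' (htrans _ _ _ hty.1 hy2))
    · rcases dest2 _ _ h1 with heq | ⟨hne, y, hy1, hy2⟩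
      · exact heq
      · exfalso
        have h2' : le t s := h2
        have hsy := hkey a s y ha hy1
        exact hne (hanti t s h2' (htrans _ _ _ hsy.1 hy2))
    · rcases dest2 _ _ h1 with heq | ⟨hne1, y1, hy11, hy12⟩
      · exact heq
      · rcases dest2 _ _ h2 with heq | ⟨hne2, y2, hy21, hy22⟩
        · exact heq.symm
        · exfalso
          have hsy := hkey a s y1 ha hy11
          have hty := hkey b t y2 hb hy21
          have hst : le s t := htrans _ _ _ hsy.1 hy12
          have hts : le t s := htrans _ _ _ hty.1 hy22
          exact hne1 (hanti t s hts hst)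
  -- trans
  · rintro (s | ⟨⟨s, a⟩, ha⟩) v w h1 h2
    · exact mk1 _ _ (htrans _ _ _ (dest1 _ _ h1) (hlift v w h2))
    · rcases dest2 _ _ h1 with rfl | ⟨hne1, y1, hy1, hle1⟩
      · exact h2
      · have h2' : le (rnd γ₀ v) (rnd γ₀ w) := hlift v w h2
        refine mk2 _ _ ?_ ⟨y1, hy1, htrans _ _ _ hle1 h2'⟩
        intro hcontra
        have hsy := hkey a s y1 ha hy1
        have hyw : le y1 (rnd γ₀ w) := htrans _ _ _ hle1 h2'
        rw [hcontra] at hyw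
        exact hsy.2 (hanti s y1 hsy.1 hyw)
  -- root
  · exact ⟨Sum.inl r, fun v => mk1 r v (hr _)⟩
  -- linearity
  · rintro w (s | ⟨⟨s, a⟩, ha⟩) (t | ⟨⟨t, b⟩, hb⟩) h1 h2
    · rcases hlin (rnd γ₀ w) s t (dest1 _ _ h1) (dest1 _ _ h2) with hcase | hcase
      · exact Or.inl (mk1 _ _ hcase)
      · exact Or.inr (mk1 _ _ hcase)
    · rcases dest2 _ _ h2 with rfl | ⟨hne, z, hz1, hz2⟩
      · exact Or.inl (mk1 _ _ (dest1 _ _ h1))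
      · have htz := hkey b t z hb hz1
        have hzw : le z (rnd γ₀ w) := hz2
        have htw : le t (rnd γ₀ w) := htrans _ _ _ htz.1 hz2
        have hsw : le s (rnd γ₀ w) := dest1 _ _ h1
        rcases hlin (rnd γ₀ w) s t hsw htw with hst | hts
        · exact Or.inl (mk1 _ _ hst)
        · by_cases hst' : s = t
          · exact Or.inl (mk1 _ _ (by rw [hst']; exact hrefl t))
          · refine Or.inr (mk2 _ _ hst' ?_)
            rcases hlin (rnd γ₀ w) z s hzw hsw with hzs | hsz
            · exact ⟨z, hz1, hzs⟩
            · exact ⟨s, hbetw b t z s hb hz1 hts hsz hst', hrefl s⟩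
    · rcases dest2 _ _ h1 with rfl | ⟨hne, z, hz1, hz2⟩
      · exact Or.inr (mk1 _ _ (dest1 _ _ h2))
      · have hsz := hkey a s z ha hz1
        have hzw : le z (rnd γ₀ w) := hz2
        have hsw : le s (rnd γ₀ w) := htrans _ _ _ hsz.1 hz2
        have htw : le t (rnd γ₀ w) := dest1 _ _ h2
        rcases hlin (rnd γ₀ w) t s htw hsw with hts | hst
        · exact Or.inr (mk1 _ _ hts)
        · by_cases hts' : t = s
          · exact Or.inr (mk1 _ _ (by rw [hts']; exact hrefl s))
          · refine Or.inl (mk2 _ _ hts' ?_)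
            rcases hlin (rnd γ₀ w) z t hzw htw with hzt | htz
            · exact ⟨z, hz1, hzt⟩
            · exact ⟨t, hbetw a s z t ha hz1 hst htz hts', hrefl t⟩
    · rcases dest2 _ _ h1 with rfl | ⟨hne1, y1, hy1, hle1⟩
      · exact Or.inr h2
      · rcases dest2 _ _ h2 with rfl | ⟨hne2, y2, hy2, hle2⟩
        · exact Or.inl h1
        · have hsy1 := hkey a s y1 ha hy1
          have hty2 := hkey b t y2 hb hy2
          have hy1w : le y1 (rnd γ₀ w) := hle1
          have hy2w : le y2 (rnd γ₀ w) := hle2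
          have hsw : le s (rnd γ₀ w) := htrans _ _ _ hsy1.1 hle1
          have htw : le t (rnd γ₀ w) := htrans _ _ _ hty2.1 hle2
          rcases eq_or_ne s t with rfl | hst
          · by_cases hab : a = b
            · subst hab
              exact Or.inl (Or.inl (congrArg Sum.inr (Subtype.ext rfl)))
            · exfalso
              rcases hlin (rnd γ₀ w) y1 y2 hy1w hy2w with hcase | hcase
              · exact pairlem a b s y1 y2 hab ha hb hy1 hy2 hcase
              · exact pairlem b a s y2 y1 (Ne.symm hab) hb ha hy2 hy1 hcase
          · rcases hlin (rnd γ₀ w) s t hsw htw with hcase | hcase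
            · refine Or.inl (mk2 _ _ (Ne.symm hst) ?_)
              rcases hlin (rnd γ₀ w) y1 t hy1w htw with hyt | hty
              · exact ⟨y1, hy1, hyt⟩
              · exact ⟨t, hbetw a s y1 t ha hy1 hcase hty (Ne.symm hst), hrefl t⟩
            · refine Or.inr (mk2 _ _ hst ?_)
              rcases hlin (rnd γ₀ w) y2 s hy2w hsw with hys | hsy
              · exact ⟨y2, hy2, hys⟩
              · exact ⟨s, hbetw b t y2 s hb hy2 hcase hsy hst, hrefl s⟩
  -- tuple condition
  · intro R x hRx
    obtain ⟨t, hxt, hcard⟩ := har2 R x hRx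
    have hsub1 : Set.range x ∩ γ₀ t ⊆ Set.range x ∩ γ t := fun u hu => ⟨hu.1, hu.2.1⟩
    have hcard0 : (Set.range x ∩ γ₀ t).ncard ≤ 1 :=
      le_trans (Set.ncard_le_ncard hsub1 (Set.toFinite _)) hcard
    by_cases hem : (Set.range x ∩ γ₀ t) = ∅
    · refine ⟨Sum.inl t, ?_⟩
      intro i
      rcases hxt i with hcase | hcase
      · exact hcase
      · by_cases hb : x i ∈ β t
        · exact hb
        · exfalso
          rw [Set.eq_empty_iff_forall_notMem] at hem
          exact hem (x i) ⟨⟨i, rfl⟩, hcase, hb⟩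
    · obtain ⟨a, haa⟩ := Set.nonempty_iff_ne_empty.mpr hem
      have hsub := subset_singleton_of_mem_of_ncard_le_one (Set.toFinite _) haa hcard0
      refine ⟨Sum.inr ⟨(t, a), haa.2⟩, ?_⟩
      intro i
      rcases hxt i with hcase | hcase
      · exact Set.mem_insert_of_mem _ hcase
      · by_cases hb : x i ∈ β t
        · exact Set.mem_insert_of_mem _ hb
        · have hxa : x i ∈ ({a} : Set A.carrier) := hsub ⟨⟨i, rfl⟩, hcase, hb⟩
          rw [Set.mem_singleton_iff] at hxa
          rw [hxa]
          exact Set.mem_insert _ _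
  -- connectivity
  · intro c
    by_cases hcγ : ∃ g, c ∈ γ₀ g
    · obtain ⟨g, hg⟩ := hcγ
      refine ⟨Sum.inr ⟨(g, c), hg⟩, Set.mem_insert _ _, ?_, ?_⟩
      · rintro (x | ⟨⟨x, d⟩, hd⟩) hx
        · exact mk2 _ _ (Ne.symm (hkey c g x hg hx).2) ⟨x, hx, hrefl x⟩
        · rcases Set.mem_insert_iff.mp hx with rfl | hx'
          · have hxg : x = g := huniq c x g hd hg
            subst hxg
            exact Or.inl rfl
          · exact mk2 _ _ (Ne.symm (hkey c g x hg hx').2) ⟨x, hx', hrefl x⟩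
      · rintro w hw' z hz1 hz2
        rcases dest2 _ _ hz1 with heq | ⟨hnez, y0, hy0, hley0⟩
        · subst heq
          exact Set.mem_insert _ _
        · have hzw : le (rnd γ₀ z) (rnd γ₀ w) := hlift z w hz2
          have hcw : c ∈ β (rnd γ₀ w) ∨ rnd γ₀ w = g := by
            rcases w with x | ⟨⟨x, d⟩, hd⟩
            · exact Or.inl hw'
            · rcases Set.mem_insert_iff.mp hw' with rfl | hcase
              · exact Or.inr (huniq c x g hd hg)
              · exact Or.inl hcase
          rcases hcw with hcw | hcw
          · have hc1 : c ∈ β (rnd γ₀ z) :=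
              hbetw c g (rnd γ₀ w) (rnd γ₀ z) hg hcw
                (htrans _ _ _ (hkey c g y0 hg hy0).1 hley0) hzw hnez
            rcases z with zx | ⟨⟨zx, zd⟩, hzd⟩
            · exact hc1
            · exact Set.mem_insert_of_mem _ hc1
          · exfalso
            have h1 := (hkey c g y0 hg hy0).1
            have h2 : le y0 g := by
              rw [← hcw]
              exact htrans _ _ _ hley0 hzw
            exact (hkey c g y0 hg hy0).2 (hanti _ _ h1 h2)
    · push_neg at hcγ
      have hocc : ∀ x, c ∈ β x ∪ γ x → c ∈ β x := by
        intro x hx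
        by_cases hbx : c ∈ β x
        · exact hbx
        · rcases hx with hcase | hcase
          · exact absurd hcase hbx
          · exact absurd ⟨hcase, hbx⟩ (hcγ x)
      refine ⟨Sum.inl (m c), hocc _ (hmB c), ?_, ?_⟩
      · rintro (x | ⟨⟨x, d⟩, hd⟩) hx
        · exact hmmin c x (Or.inl hx)
        · rcases Set.mem_insert_iff.mp hx with rfl | hcase
          · exact absurd hd (hcγ x)
          · exact hmmin c x (Or.inl hcase)
      · rintro w hw' z hz1 hz2
        have hzw := hlift z w hz2
        have hcw : c ∈ β (rnd γ₀ w) := by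
          rcases w with x | ⟨⟨x, d⟩, hd⟩
          · exact hw'
          · rcases Set.mem_insert_iff.mp hw' with rfl | hcase
            · exact absurd hd (hcγ x)
            · exact hcase
        have hz1' : le (m c) (rnd γ₀ z) := dest1 _ _ hz1
        have hcz : c ∈ β (rnd γ₀ z) := hocc _ (hmclos c (rnd γ₀ w) (Or.inl hcw) _ hz1' hzw)
        rcases z with x | ⟨⟨x, d⟩, hd⟩
        · exact hcz
        · exact Set.mem_insert_of_mem _ hcz
  -- width
  · rintro (x | ⟨⟨x, d⟩, hd⟩)
    · exact le_trans (hw x) (Nat.le_succ k)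
    · exact le_trans (Set.ncard_insert_le _ _) (Nat.add_le_add_right (hw x) 1)

theorem stmt_14 (σ : Signature) (A : Struct σ) (hA : Finite A.carrier) (k : ℕ) :
    (∃ (T : Type) (le : T → T → Prop) (B : T → Set A.carrier),
        Finite T ∧ IsTreeDecomp A le B ∧ ∀ t, (B t).ncard ≤ k + 1) ↔
    (∃ (T : Type) (le : T → T → Prop) (β γ : T → Set A.carrier),
        Finite T ∧ IsExtTreeDecomp A le β γ ∧ (∀ t, (β t).ncard ≤ k) ∧
          ArityLE A le β γ 1) := by
  constructor
  · exact stmt14_fwd σ A hA k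
  · exact stmt14_rev σ A hA k
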